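/- arXiv:1210.3429 — 2 statements merged into one kernel-verified Lean document; each statement's English description precedes it below -/
import Mathlib

section
/- Let v0(x₁, x₂) = 1_{[0,1]}(x₁) on ℝ². Then for every t ∈ (0, 1/64) and every x = (x₁, x₂) with t^{1/2} < x₁ < 2t^{1/2}, one has t^{1/2} |∂₁ e^{tΔ}v0(x)| ≥ (1/√π) ∫₁³ z e^{-z²} dz. -/
noncomputable section
open MeasureTheory Real ENNReal Set intervalIntegral

/-- The plane `ℝ²`. -/
abbrev E2 : Type := EuclideanSpace ℝ (Fin 2)

/-- The two-dimensional heat kernel `K_t(x) = (4πt)⁻¹ exp(-|x|²/(4t))`. -/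
def heatKernel (t : ℝ) (x : E2) : ℝ := (4 * π * t)⁻¹ * Real.exp (-‖x‖ ^ 2 / (4 * t))

/-- The heat semigroup `e^{tΔ}f(x) = ∫ (4πt)⁻¹ e^{-|x-y|²/(4t)} f(y) dy`. -/
def heatSG (t : ℝ) (f : E2 → ℝ) (x : E2) : ℝ := ∫ y : E2, heatKernel t (x - y) * f y

/-- The initial datum `v0(x₁,x₂) = 1_{[0,1]}(x₁)`. -/
def v0Ind : E2 → ℝ := fun x => Set.indicator (Set.Icc (0 : ℝ) 1) (fun _ => (1 : ℝ)) (x 0)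

lemma heatSG_v0Ind_repr (t : ℝ) (ht : 0 < t) (x : E2) :
    heatSG t v0Ind x = (Real.sqrt (4 * π * t))⁻¹ *
      ∫ u in (x 0 - 1)..(x 0), Real.exp (-u ^ 2 / (4 * t)) := by
  have hπt : (0:ℝ) < 4 * π * t := by positivity
  have step1 : heatSG t v0Ind x
      = ∫ p : ℝ × ℝ, ((4 * π * t)⁻¹ * Real.exp (-(x 0 - p.1) ^ 2 / (4 * t)) *
          Set.indicator (Set.Icc (0:ℝ) 1) (fun _ => (1:ℝ)) p.1)
        * Real.exp (-(x 1 - p.2) ^ 2 / (4 * t)) := by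
    unfold heatSG
    rw [← (((EuclideanSpace.volume_preserving_symm_measurableEquiv_toLp (ι := Fin 2)).symm _).integral_comp'
        (fun y => heatKernel t (x - y) * v0Ind y))]
    rw [← (((volume_preserving_finTwoArrow ℝ).symm _).integral_comp' _)]
    congr 1; ext p
    set y : E2 := (MeasurableEquiv.toLp 2 (Fin 2 → ℝ)).symm.symm (MeasurableEquiv.finTwoArrow.symm p) with hy
    have h0 : y 0 = p.1 := by simp [hy, MeasurableEquiv.finTwoArrow]
    have h1 : y 1 = p.2 := by simp [hy, MeasurableEquiv.finTwoArrow]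
    have hnorm : ‖x - y‖ ^ 2 = (x 0 - y 0) ^ 2 + (x 1 - y 1) ^ 2 := by
      rw [EuclideanSpace.norm_eq, Real.sq_sqrt (by positivity)]
      simp [Fin.sum_univ_two, sq_abs]
    unfold heatKernel v0Ind
    rw [hnorm, h0, h1]
    rw [show -((x 0 - p.1) ^ 2 + (x 1 - p.2) ^ 2) / (4 * t)
        = -(x 0 - p.1) ^ 2 / (4 * t) + -(x 1 - p.2) ^ 2 / (4 * t) by ring, Real.exp_add]
    ring
  rw [step1, MeasureTheory.Measure.volume_eq_prod,
    MeasureTheory.integral_prod_mul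
      (fun s : ℝ => (4 * π * t)⁻¹ * Real.exp (-(x 0 - s) ^ 2 / (4 * t)) *
        Set.indicator (Set.Icc (0:ℝ) 1) (fun _ => (1:ℝ)) s)
      (fun s : ℝ => Real.exp (-(x 1 - s) ^ 2 / (4 * t)))]
  have gauss : ∫ s : ℝ, Real.exp (-(x 1 - s) ^ 2 / (4 * t)) = Real.sqrt (4 * π * t) := by
    rw [integral_sub_left_eq_self (fun s => Real.exp (-s ^ 2 / (4 * t))) volume (x 1)]
    have : ∀ s : ℝ, -s ^ 2 / (4 * t) = -((4*t)⁻¹) * s ^ 2 := by intro s; field_simp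
    simp_rw [this, integral_gaussian]
    rw [div_inv_eq_mul]
    congr 1; ring
  have firstInt : (∫ s : ℝ, (4 * π * t)⁻¹ * Real.exp (-(x 0 - s) ^ 2 / (4 * t)) *
        Set.indicator (Set.Icc (0:ℝ) 1) (fun _ => (1:ℝ)) s)
      = (4 * π * t)⁻¹ * ∫ u in (x 0 - 1)..(x 0), Real.exp (-u ^ 2 / (4 * t)) := by
    have h1 : ∀ s : ℝ, (4 * π * t)⁻¹ * Real.exp (-(x 0 - s) ^ 2 / (4 * t)) *
          Set.indicator (Set.Icc (0:ℝ) 1) (fun _ => (1:ℝ)) s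
        = Set.indicator (Set.Icc (0:ℝ) 1)
            (fun s => (4 * π * t)⁻¹ * Real.exp (-(x 0 - s) ^ 2 / (4 * t))) s := by
      intro s
      by_cases hs : s ∈ Set.Icc (0:ℝ) 1 <;> simp [hs]
    simp_rw [h1]
    rw [MeasureTheory.integral_indicator measurableSet_Icc]
    rw [integral_Icc_eq_integral_Ioc, ← intervalIntegral.integral_of_le zero_le_one]
    rw [intervalIntegral.integral_const_mul]
    rw [intervalIntegral.integral_comp_sub_left (fun u => Real.exp (-u ^ 2 / (4 * t))) (x 0)]
    norm_num
  rw [firstInt, gauss]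
  set S := Real.sqrt (4 * π * t) with hS
  have hs : S * S = 4 * π * t := Real.mul_self_sqrt (le_of_lt hπt)
  have hsne : S ≠ 0 := by rw [hS]; positivity
  rw [← hs, mul_inv]
  field_simp

lemma hasDerivAt_g (t : ℝ) (ht : 0 < t) (a : ℝ) :
    HasDerivAt (fun a : ℝ => (Real.sqrt (4 * π * t))⁻¹ *
        ∫ u in (a - 1)..a, Real.exp (-u ^ 2 / (4 * t)))
      ((Real.sqrt (4 * π * t))⁻¹ *
        (Real.exp (-a ^ 2 / (4 * t)) - Real.exp (-(a - 1) ^ 2 / (4 * t)))) a := by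
  have hc : Continuous fun u : ℝ => Real.exp (-u ^ 2 / (4 * t)) := by continuity
  have hint : ∀ b c : ℝ, IntervalIntegrable (fun u : ℝ => Real.exp (-u ^ 2 / (4 * t))) volume b c :=
    fun b c => hc.intervalIntegrable b c
  have hsplit : (fun a : ℝ => (Real.sqrt (4 * π * t))⁻¹ *
        ∫ u in (a - 1)..a, Real.exp (-u ^ 2 / (4 * t)))
      = fun a : ℝ => (Real.sqrt (4 * π * t))⁻¹ *
        ((∫ u in (0:ℝ)..a, Real.exp (-u ^ 2 / (4 * t)))
          - ∫ u in (0:ℝ)..(a - 1), Real.exp (-u ^ 2 / (4 * t))) := by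
    funext a
    rw [intervalIntegral.integral_interval_sub_left (hint 0 a) (hint 0 (a - 1))]
  rw [hsplit]
  have H1 : HasDerivAt (fun b : ℝ => ∫ u in (0:ℝ)..b, Real.exp (-u ^ 2 / (4 * t)))
      (Real.exp (-a ^ 2 / (4 * t))) a := (hc.integral_hasStrictDerivAt 0 a).hasDerivAt
  have H2 : HasDerivAt (fun b : ℝ => ∫ u in (0:ℝ)..(b - 1), Real.exp (-u ^ 2 / (4 * t)))
      (Real.exp (-(a - 1) ^ 2 / (4 * t))) a := by
    have h := ((hc.integral_hasStrictDerivAt 0 (a - 1)).hasDerivAt).comp a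
      ((hasDerivAt_id a).sub_const 1)
    simpa [Function.comp_def] using h
  exact (H1.sub H2).const_mul _

lemma integral_z_exp : (∫ z in (1:ℝ)..3, z * Real.exp (-z ^ 2))
    = (Real.exp (-1) - Real.exp (-9)) / 2 := by
  have hd : ∀ z : ℝ, HasDerivAt (fun z : ℝ => -Real.exp (-z ^ 2) / 2)
      (z * Real.exp (-z ^ 2)) z := by
    intro z
    have h := (((hasDerivAt_pow 2 z).neg).exp).neg.div_const 2
    exact h.congr_deriv (by simp; ring)
  rw [intervalIntegral.integral_eq_sub_of_hasDerivAt (fun z _ => hd z)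
    ((continuous_id.mul (by continuity)).intervalIntegrable 1 3)]
  norm_num
  ring

/-- for `v0(x₁,x₂) = 1_{[0,1]}(x₁)`, every `t ∈ (0, 1/64)` and every
`x = (x₁,x₂)` with `√t < x₁ < 2√t`, one has
`t^{1/2} |∂₁ e^{tΔ}v0(x)| ≥ (1/√π) ∫₁³ z e^{-z²} dz`. -/
theorem heatSG_indicator_gradient_lower_bound (t : ℝ) (ht : 0 < t) (ht' : t < 1 / 64)
    (x : E2) (hx1 : Real.sqrt t < x 0) (hx2 : x 0 < 2 * Real.sqrt t) :
    t ^ (1 / 2 : ℝ) * |fderiv ℝ (heatSG t v0Ind) x (EuclideanSpace.single 0 1)| ≥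
      (1 / Real.sqrt π) * ∫ z in (1 : ℝ)..3, z * Real.exp (-z ^ 2) := by
  have hπt : (0:ℝ) < 4 * π * t := by positivity
  set d : ℝ := (Real.sqrt (4 * π * t))⁻¹ *
      (Real.exp (-(x 0) ^ 2 / (4 * t)) - Real.exp (-(x 0 - 1) ^ 2 / (4 * t))) with hd
  have hrepr : heatSG t v0Ind = fun y : E2 => (Real.sqrt (4 * π * t))⁻¹ *
      ∫ u in (y 0 - 1)..(y 0), Real.exp (-u ^ 2 / (4 * t)) :=
    funext fun y => heatSG_v0Ind_repr t ht y
  have hproj : HasFDerivAt (fun y : E2 => y 0)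
      (EuclideanSpace.proj (0 : Fin 2) : E2 →L[ℝ] ℝ) x := by
    exact (EuclideanSpace.proj (0 : Fin 2) : E2 →L[ℝ] ℝ).hasFDerivAt
  have hF : HasFDerivAt (heatSG t v0Ind)
      (d • (EuclideanSpace.proj (0 : Fin 2) : E2 →L[ℝ] ℝ)) x := by
    rw [hrepr]
    exact HasDerivAt.comp_hasFDerivAt (f := fun y : E2 => y 0) x (hasDerivAt_g t ht (x 0)) hproj
  rw [hF.fderiv]
  have heval : (d • (EuclideanSpace.proj (0 : Fin 2) : E2 →L[ℝ] ℝ))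
      (EuclideanSpace.single 0 1) = d := by simp
  rw [heval, integral_z_exp]
  -- numeric part
  have hst : Real.sqrt t < 1 / 8 := by
    have h1 : Real.sqrt t < Real.sqrt (1 / 64) := Real.sqrt_lt_sqrt ht.le ht'
    have h2 : Real.sqrt (1 / 64) = 1 / 8 := by
      rw [show (1:ℝ)/64 = (1/8)^2 by norm_num, Real.sqrt_sq (by norm_num)]
    linarith
  have hst0 : 0 < Real.sqrt t := Real.sqrt_pos.mpr ht
  have hmul : Real.sqrt t * Real.sqrt t = t := Real.mul_self_sqrt ht.le
  have hA : Real.exp (-1) ≤ Real.exp (-(x 0) ^ 2 / (4 * t)) := by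
    apply Real.exp_le_exp.mpr
    rw [neg_div, neg_le_neg_iff, div_le_one (by linarith)]
    nlinarith
  have hB : Real.exp (-(x 0 - 1) ^ 2 / (4 * t)) ≤ Real.exp (-9) := by
    apply Real.exp_le_exp.mpr
    rw [neg_div, neg_le_neg_iff, le_div_iff₀ (by linarith)]
    nlinarith
  have hexp : Real.exp (-9) < Real.exp (-1) := Real.exp_lt_exp.mpr (by norm_num)
  have hdpos : 0 < d := by
    apply _root_.mul_pos (by positivity)
    linarith
  rw [abs_of_pos hdpos, hd]
  have hsqrt4 : Real.sqrt (4 * π * t) = 2 * Real.sqrt π * Real.sqrt t := by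
    rw [show 4 * π * t = (2:ℝ)^2 * (π * t) by ring, Real.sqrt_mul (by positivity),
      Real.sqrt_sq (by norm_num), Real.sqrt_mul Real.pi_pos.le]
    ring
  have hrpow : t ^ (1 / 2 : ℝ) = Real.sqrt t := (Real.sqrt_eq_rpow t).symm
  rw [hrpow, hsqrt4]
  have hπ0 : 0 < Real.sqrt π := Real.sqrt_pos.mpr Real.pi_pos
  rw [ge_iff_le]
  have key : Real.sqrt t * ((2 * Real.sqrt π * Real.sqrt t)⁻¹ *
      (Real.exp (-(x 0) ^ 2 / (4 * t)) - Real.exp (-(x 0 - 1) ^ 2 / (4 * t))))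
      = (Real.exp (-(x 0) ^ 2 / (4 * t)) - Real.exp (-(x 0 - 1) ^ 2 / (4 * t)))
        / (2 * Real.sqrt π) := by
    field_simp
  rw [key]
  have hLHS : 1 / Real.sqrt π * ((Real.exp (-1) - Real.exp (-9)) / 2)
      = (Real.exp (-1) - Real.exp (-9)) / (2 * Real.sqrt π) := by
    rw [div_mul_eq_mul_div, one_mul, div_div]
  rw [hLHS]
  exact div_le_div_of_nonneg_right (by linarith) (by positivity)
end
end

section
/- Define the norm ‖u‖_X = sup_{t>0} ‖u(t,·)‖_{L¹(ℝ²)} + sup_{t>0} t‖u(t,·)‖_{L^∞(ℝ²)} and let L(u)(t) = ∫₀^t e^{-(t−τ)} e^{(t−τ)Δ} u(τ) dτ. Then there is a constant c > 0 such that sup_{t>0} ‖L(u)(t)‖_{L^∞(ℝ²)} ≤ c ‖u‖_X for all u with ‖u‖_X < ∞. -/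
noncomputable section
open MeasureTheory Real ENNReal Set

/-- `‖u‖_X = sup_{t>0} ‖u(t,·)‖_{L¹} + sup_{t>0} t ‖u(t,·)‖_{L^∞}`. -/
def Xnorm (u : ℝ → E2 → ℝ) : ℝ≥0∞ :=
  (⨆ t ∈ Ioi (0 : ℝ), eLpNorm (u t) 1 (volume : Measure E2)) +
    ⨆ t ∈ Ioi (0 : ℝ), ENNReal.ofReal t * eLpNorm (u t) ∞ (volume : Measure E2)

/-- The linear Duhamel term `L(u)(t) = ∫₀ᵗ e^{-(t-τ)} e^{(t-τ)Δ} u(τ) dτ`. -/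
def Lop (u : ℝ → E2 → ℝ) (t : ℝ) (x : E2) : ℝ :=
  ∫ τ in Ioc (0 : ℝ) t, Real.exp (-(t - τ)) * heatSG (t - τ) (u τ) x

/- ### Auxiliary lemmas -/

lemma enorm_integral_le {α : Type*} [MeasurableSpace α] (μ : Measure α)
    {G : Type*} [NormedAddCommGroup G] [NormedSpace ℝ G] (g : α → G) :
    ENNReal.ofReal ‖∫ a, g a ∂μ‖ ≤ ∫⁻ a, ENNReal.ofReal ‖g a‖ ∂μ :=
  (ENNReal.ofReal_le_ofReal (norm_integral_le_lintegral_norm g)).trans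
    ENNReal.ofReal_toReal_le

lemma heatKernel_nonneg {s : ℝ} (hs : 0 ≤ s) (x : E2) : 0 ≤ heatKernel s x := by
  unfold heatKernel
  have : 0 ≤ (4 * π * s)⁻¹ := by positivity
  positivity

lemma heatKernel_le {s : ℝ} (hs : 0 < s) (x : E2) : heatKernel s x ≤ (4 * π * s)⁻¹ := by
  unfold heatKernel
  have h1 : Real.exp (-‖x‖ ^ 2 / (4 * s)) ≤ 1 := by
    apply Real.exp_le_one_iff.2
    have : 0 ≤ ‖x‖ ^ 2 / (4 * s) := by positivity
    linarith [neg_div (4*s) (‖x‖^2)]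
  have h2 : 0 ≤ (4 * π * s)⁻¹ := by positivity
  calc (4 * π * s)⁻¹ * Real.exp (-‖x‖ ^ 2 / (4 * s)) ≤ (4 * π * s)⁻¹ * 1 :=
        mul_le_mul_of_nonneg_left h1 h2
    _ = (4 * π * s)⁻¹ := mul_one _

lemma heatKernel_continuous (s : ℝ) : Continuous (heatKernel s) := by
  unfold heatKernel
  fun_prop

lemma integrable_gauss {b : ℝ} (hb : 0 < b) :
    Integrable (fun v : E2 => Real.exp (-b * ‖v‖ ^ 2)) := by
  have h := (GaussianFourier.integrable_cexp_neg_mul_sq_norm_add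
      (V := E2) (b := (b : ℂ)) (by simpa using hb) 0 0).norm
  have : (fun v : E2 => ‖Complex.exp (-(b:ℂ) * (‖v‖:ℂ) ^ 2 + 0 * (inner ℝ 0 v : ℝ))‖)
      = fun v : E2 => Real.exp (-b * ‖v‖ ^ 2) := by
    funext v
    rw [Complex.norm_exp]
    norm_num
    left
    rw [← Complex.ofReal_pow, Complex.ofReal_re]
  rwa [this] at h

lemma integral_heatKernel {s : ℝ} (hs : 0 < s) : ∫ x : E2, heatKernel s x = 1 := by
  have hb : 0 < (4 * s)⁻¹ := by positivity
  have h := GaussianFourier.integral_rexp_neg_mul_sq_norm (V := E2) hb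
  have hrank : (Module.finrank ℝ E2 : ℝ) = 2 := by
    simp [finrank_euclideanSpace]
  rw [hrank, show (2:ℝ)/2 = (1:ℝ) by norm_num, Real.rpow_one] at h
  unfold heatKernel
  have heq : (fun x : E2 => (4 * π * s)⁻¹ * Real.exp (-‖x‖ ^ 2 / (4 * s)))
      = fun x : E2 => (4 * π * s)⁻¹ * Real.exp (-(4 * s)⁻¹ * ‖x‖ ^ 2) := by
    funext x; ring_nf
  rw [heq, integral_const_mul, h]
  have hπ := Real.pi_pos
  field_simp

lemma integrable_heatKernel {s : ℝ} (hs : 0 < s) : Integrable (heatKernel s) := by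
  have hb : 0 < (4 * s)⁻¹ := by positivity
  have heq : heatKernel s
      = fun x : E2 => (4 * π * s)⁻¹ * Real.exp (-(4 * s)⁻¹ * ‖x‖ ^ 2) := by
    funext x; unfold heatKernel; ring_nf
  rw [heq]
  exact (integrable_gauss hb).const_mul _

lemma lintegral_heatKernel {s : ℝ} (hs : 0 < s) :
    ∫⁻ x : E2, ENNReal.ofReal (heatKernel s x) = 1 := by
  rw [← ofReal_integral_eq_lintegral_ofReal (integrable_heatKernel hs)
    (Filter.Eventually.of_forall (heatKernel_nonneg hs.le)), integral_heatKernel hs]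
  simp

lemma lintegral_heatKernel_sub {s : ℝ} (hs : 0 < s) (x : E2) :
    ∫⁻ y : E2, ENNReal.ofReal (heatKernel s (x - y)) = 1 := by
  have hmp : MeasurePreserving (fun y : E2 => x - y) volume volume :=
    Measure.measurePreserving_sub_left volume x
  have hm : Measurable (fun z : E2 => ENNReal.ofReal (heatKernel s z)) :=
    ENNReal.measurable_ofReal.comp (heatKernel_continuous s).measurable
  rw [hmp.lintegral_comp hm]
  exact lintegral_heatKernel hs

/-- `L^∞` bound for the heat semigroup. -/
lemma heatSG_le_top {s : ℝ} (hs : 0 ≤ s) (f : E2 → ℝ) (x : E2) :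
    ENNReal.ofReal ‖heatSG s f x‖ ≤ eLpNorm f ∞ (volume : Measure E2) := by
  rcases eq_or_lt_of_le hs with rfl | hs'
  · have : heatSG 0 f x = 0 := by
      unfold heatSG heatKernel
      simp
    simp [this]
  set M := eLpNorm f ∞ (volume : Measure E2) with hM
  calc ENNReal.ofReal ‖heatSG s f x‖
      ≤ ∫⁻ y : E2, ENNReal.ofReal ‖heatKernel s (x - y) * f y‖ :=
        enorm_integral_le _ _
    _ ≤ ∫⁻ y : E2, ENNReal.ofReal (heatKernel s (x - y)) * M := by
        apply lintegral_mono_ae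
        have hae : ∀ᵐ y : E2, (‖f y‖₊ : ℝ≥0∞) ≤ eLpNormEssSup f volume :=
          enorm_ae_le_eLpNormEssSup f volume
        filter_upwards [hae] with y hy
        rw [norm_mul, ENNReal.ofReal_mul (norm_nonneg _)]
        apply mul_le_mul'
        · exact ENNReal.ofReal_le_ofReal (le_of_eq (Real.norm_of_nonneg
            (heatKernel_nonneg hs _)))
        · rw [ofReal_norm]
          rw [hM, eLpNorm_exponent_top]
          exact hy
    _ = M * ∫⁻ y : E2, ENNReal.ofReal (heatKernel s (x - y)) := by
        have hm : AEMeasurable (fun y : E2 => ENNReal.ofReal (heatKernel s (x - y)))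
            volume := by
          apply Measurable.aemeasurable
          exact ENNReal.measurable_ofReal.comp
            ((heatKernel_continuous s).measurable.comp (measurable_const.sub measurable_id))
        rw [lintegral_mul_const'' M hm, mul_comm]
    _ = M := by rw [lintegral_heatKernel_sub hs' x, mul_one]

/-- `L¹` bound for the heat semigroup. -/
lemma heatSG_le_one {s : ℝ} (hs : 0 < s) (f : E2 → ℝ) (x : E2) :
    ENNReal.ofReal ‖heatSG s f x‖
      ≤ ENNReal.ofReal (4 * π * s)⁻¹ * eLpNorm f 1 (volume : Measure E2) := by
  calc ENNReal.ofReal ‖heatSG s f x‖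
      ≤ ∫⁻ y : E2, ENNReal.ofReal ‖heatKernel s (x - y) * f y‖ :=
        enorm_integral_le _ _
    _ ≤ ∫⁻ y : E2, ENNReal.ofReal (4 * π * s)⁻¹ * (‖f y‖₊ : ℝ≥0∞) := by
        refine lintegral_mono fun y => ?_
        dsimp only
        rw [norm_mul, ENNReal.ofReal_mul (norm_nonneg _)]
        refine mul_le_mul' ?_ (le_of_eq (ofReal_norm _))
        apply ENNReal.ofReal_le_ofReal
        rw [Real.norm_of_nonneg (heatKernel_nonneg hs.le _)]
        exact heatKernel_le hs _
    _ = ENNReal.ofReal (4 * π * s)⁻¹ * ∫⁻ y : E2, (‖f y‖₊ : ℝ≥0∞) :=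
        lintegral_const_mul' _ _ ENNReal.ofReal_ne_top
    _ = ENNReal.ofReal (4 * π * s)⁻¹ * eLpNorm f 1 (volume : Measure E2) := by
        rw [eLpNorm_one_eq_lintegral_enorm]; rfl

/-- there is a constant `c > 0` such that
`sup_{t>0} ‖L(u)(t)‖_{L^∞(ℝ²)} ≤ c ‖u‖_X` for all `u` with `‖u‖_X < ∞`. -/
theorem linear_estimate_Linfty :
    ∃ c : ℝ, 0 < c ∧ ∀ u : ℝ → E2 → ℝ,
      Measurable (Function.uncurry u) → Xnorm u < ∞ →
      (⨆ t ∈ Ioi (0 : ℝ), eLpNorm (Lop u t) ∞ (volume : Measure E2))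
        ≤ ENNReal.ofReal c * Xnorm u := by
  refine ⟨1, one_pos, fun u _hu hX => ?_⟩
  rw [ENNReal.ofReal_one, one_mul]
  set M1 := ⨆ t ∈ Ioi (0 : ℝ), eLpNorm (u t) 1 (volume : Measure E2) with hM1
  set Mi := ⨆ t ∈ Ioi (0 : ℝ),
    ENNReal.ofReal t * eLpNorm (u t) ∞ (volume : Measure E2) with hMi
  have hXnorm : Xnorm u = M1 + Mi := rfl
  apply iSup₂_le
  intro t ht
  have ht0 : (0 : ℝ) < t := ht
  -- pointwise bound
  have key : ∀ x : E2, ENNReal.ofReal ‖Lop u t x‖ ≤ M1 + Mi := by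
    intro x
    have step1 : ENNReal.ofReal ‖Lop u t x‖
        ≤ ∫⁻ τ in Ioc (0 : ℝ) t, ENNReal.ofReal ‖heatSG (t - τ) (u τ) x‖ := by
      refine (enorm_integral_le _ _).trans ?_
      apply setLIntegral_mono' measurableSet_Ioc
      intro τ hτ
      rw [norm_mul, ENNReal.ofReal_mul (norm_nonneg _)]
      have : ENNReal.ofReal ‖Real.exp (-(t - τ))‖ ≤ 1 := by
        rw [Real.norm_of_nonneg (Real.exp_nonneg _)]
        simp only [← ENNReal.ofReal_one]
        apply ENNReal.ofReal_le_ofReal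
        exact Real.exp_le_one_iff.2 (by linarith [hτ.2])
      calc ENNReal.ofReal ‖Real.exp (-(t - τ))‖ * ENNReal.ofReal ‖heatSG (t - τ) (u τ) x‖
          ≤ 1 * ENNReal.ofReal ‖heatSG (t - τ) (u τ) x‖ := mul_le_mul_left this _
        _ = _ := one_mul _
    have hsplit : Ioc (0 : ℝ) t = Ioc (0 : ℝ) (t / 2) ∪ Ioc (t / 2) t :=
      (Ioc_union_Ioc_eq_Ioc (by linarith) (by linarith)).symm
    have step2 : (∫⁻ τ in Ioc (0 : ℝ) t, ENNReal.ofReal ‖heatSG (t - τ) (u τ) x‖)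
        = (∫⁻ τ in Ioc (0 : ℝ) (t / 2), ENNReal.ofReal ‖heatSG (t - τ) (u τ) x‖)
          + ∫⁻ τ in Ioc (t / 2) t, ENNReal.ofReal ‖heatSG (t - τ) (u τ) x‖ := by
      rw [hsplit, lintegral_union measurableSet_Ioc (Ioc_disjoint_Ioc_of_le le_rfl)]
    -- first piece
    have piece1 : (∫⁻ τ in Ioc (0 : ℝ) (t / 2), ENNReal.ofReal ‖heatSG (t - τ) (u τ) x‖)
        ≤ M1 := by
      have hb : ∀ τ ∈ Ioc (0 : ℝ) (t / 2),
          ENNReal.ofReal ‖heatSG (t - τ) (u τ) x‖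
            ≤ ENNReal.ofReal (2 * π * t)⁻¹ * M1 := by
        intro τ hτ
        have hs : 0 < t - τ := by
          have := hτ.2; linarith
        refine (heatSG_le_one hs (u τ) x).trans ?_
        apply mul_le_mul'
        · apply ENNReal.ofReal_le_ofReal
          apply inv_anti₀ (by positivity)
          have := hτ.2
          nlinarith [Real.pi_pos]
        · exact le_iSup₂ (f := fun t _ => eLpNorm (u t) 1 (volume : Measure E2)) τ hτ.1
      calc (∫⁻ τ in Ioc (0 : ℝ) (t / 2), ENNReal.ofReal ‖heatSG (t - τ) (u τ) x‖)
          ≤ ∫⁻ _ in Ioc (0 : ℝ) (t / 2), ENNReal.ofReal (2 * π * t)⁻¹ * M1 :=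
            setLIntegral_mono' measurableSet_Ioc hb
        _ = ENNReal.ofReal (2 * π * t)⁻¹ * M1 * ENNReal.ofReal (t / 2) := by
            rw [setLIntegral_const, Real.volume_Ioc, sub_zero]
        _ = (ENNReal.ofReal (2 * π * t)⁻¹ * ENNReal.ofReal (t / 2)) * M1 := by ring
        _ ≤ 1 * M1 := by
            apply mul_le_mul_left
            rw [← ENNReal.ofReal_mul (by positivity), ← ENNReal.ofReal_one]
            apply ENNReal.ofReal_le_ofReal
            rw [show (2 * π * t)⁻¹ * (t / 2) = (4 * π)⁻¹ * (t / t) by field_simp; ring]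
            rw [div_self ht0.ne']
            rw [mul_one]
            rw [inv_le_one_iff₀]
            right
            nlinarith [Real.pi_gt_three]
        _ = M1 := one_mul _
    -- second piece
    have piece2 : (∫⁻ τ in Ioc (t / 2) t, ENNReal.ofReal ‖heatSG (t - τ) (u τ) x‖)
        ≤ Mi := by
      have hb : ∀ τ ∈ Ioc (t / 2) t,
          ENNReal.ofReal ‖heatSG (t - τ) (u τ) x‖ ≤ Mi / ENNReal.ofReal (t / 2) := by
        intro τ hτ
        have hτ0 : 0 < τ := lt_trans (by linarith) hτ.1
        have hs : 0 ≤ t - τ := by linarith [hτ.2]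
        refine (heatSG_le_top hs (u τ) x).trans ?_
        have h1 : ENNReal.ofReal τ * eLpNorm (u τ) ∞ (volume : Measure E2) ≤ Mi :=
          le_iSup₂ (f := fun t _ => ENNReal.ofReal t * eLpNorm (u t) ∞
            (volume : Measure E2)) τ hτ0
        have h2 : eLpNorm (u τ) ∞ (volume : Measure E2) ≤ Mi / ENNReal.ofReal τ := by
          rw [ENNReal.le_div_iff_mul_le (Or.inl (by simp [hτ0])) (Or.inl ENNReal.ofReal_ne_top)]
          rwa [mul_comm]
        refine h2.trans ?_
        exact ENNReal.div_le_div_left (ENNReal.ofReal_le_ofReal hτ.1.le) Mi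
      calc (∫⁻ τ in Ioc (t / 2) t, ENNReal.ofReal ‖heatSG (t - τ) (u τ) x‖)
          ≤ ∫⁻ _ in Ioc (t / 2) t, Mi / ENNReal.ofReal (t / 2) :=
            setLIntegral_mono' measurableSet_Ioc hb
        _ = Mi / ENNReal.ofReal (t / 2) * ENNReal.ofReal (t / 2) := by
            rw [setLIntegral_const, Real.volume_Ioc,
              show t - t / 2 = t / 2 by ring]
        _ = Mi := ENNReal.div_mul_cancel (by simp [ht0]) ENNReal.ofReal_ne_top
    calc ENNReal.ofReal ‖Lop u t x‖
        ≤ _ := step1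
      _ = _ := step2
      _ ≤ M1 + Mi := add_le_add piece1 piece2
  -- conclude
  rw [hXnorm, eLpNorm_exponent_top, eLpNormEssSup]
  refine essSup_le_of_ae_le _ ?_
  apply Filter.Eventually.of_forall
  intro x
  show ‖Lop u t x‖ₑ ≤ M1 + Mi
  rw [← ofReal_norm]
  exact key x
end
end
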